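/- (Gordan's theorem of the alternative) Let A be an m × n real matrix. Then exactly one of the following holds: (1) there exists x ∈ ℝⁿ with Ax > 0 (all entries strictly positive); (2) there exists a nonzero y ∈ ℝᵐ with y ≥ 0 and Aᵀy = 0. -/

import Mathlib

/-- Exclusivity half of Gordan's theorem. -/
lemma gordan_not_both {m n : ℕ} (A : Matrix (Fin m) (Fin n) ℝ)
    (h1 : ∃ x : Fin n → ℝ, ∀ i, 0 < A.mulVec x i)
    (h2 : ∃ y : Fin m → ℝ, y ≠ 0 ∧ (∀ i, 0 ≤ y i) ∧ A.transpose.mulVec y = 0) : False := by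
  obtain ⟨x, hx⟩ := h1
  obtain ⟨y, hy0, hynn, hyA⟩ := h2
  have hd : dotProduct y (A.mulVec x) = 0 := by
    rw [Matrix.dotProduct_mulVec, ← Matrix.mulVec_transpose, hyA]
    simp [dotProduct]
  obtain ⟨i, hi⟩ := Function.ne_iff.mp hy0
  have hyi : 0 < y i := lt_of_le_of_ne (hynn i) (Ne.symm hi)
  have hpos : 0 < dotProduct y (A.mulVec x) := by
    apply Finset.sum_pos' (fun j _ => mul_nonneg (hynn j) (hx j).le)
    exact ⟨i, Finset.mem_univ i, mul_pos hyi (hx i)⟩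
  exact absurd hd hpos.ne'

/-- Gordan's theorem of the alternative: for an m × n real matrix A, exactly
one of the following holds: (1) ∃ x with Ax entrywise strictly positive;
(2) ∃ nonzero y ≥ 0 with Aᵀy = 0. -/
theorem stmt_13 {m n : ℕ} (A : Matrix (Fin m) (Fin n) ℝ) :
    Xor' (∃ x : Fin n → ℝ, ∀ i, 0 < A.mulVec x i)
      (∃ y : Fin m → ℝ, y ≠ 0 ∧ (∀ i, 0 ≤ y i) ∧ A.transpose.mulVec y = 0) := by
  set r : Fin m → (Fin n → ℝ) := fun i => A i with hr
  by_cases h0 : (0 : Fin n → ℝ) ∈ convexHull ℝ (Set.range r)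
  · -- case (2)
    rw [convexHull_range_eq_exists_affineCombination] at h0
    obtain ⟨s, w, hw0, hw1, hcomb⟩ := h0
    have hy : ∃ y : Fin m → ℝ, y ≠ 0 ∧ (∀ i, 0 ≤ y i) ∧ A.transpose.mulVec y = 0 := by
      refine ⟨fun i => if i ∈ s then w i else 0, ?_, ?_, ?_⟩
      · intro hzero
        have hsum : ∑ i, (if i ∈ s then w i else 0) = 1 := by
          rw [Finset.sum_ite_mem, Finset.univ_inter, hw1]
        rw [show (fun i => if i ∈ s then w i else 0) = 0 from hzero] at hsum
        simp at hsum
      · intro i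
        dsimp only
        split_ifs with hi
        · exact hw0 i hi
        · exact le_refl 0
      · have hlin : ∑ i ∈ s, w i • r i = 0 := by
          rw [← Finset.affineCombination_eq_linear_combination s r w hw1]
          exact hcomb
        funext j
        have hj : ∑ i ∈ s, w i * A i j = 0 := by
          have := congrFun hlin j
          simpa using this
        simp only [Matrix.mulVec, dotProduct, Matrix.transpose_apply, Pi.zero_apply]
        rw [Finset.sum_congr rfl (fun i (_ : i ∈ Finset.univ) => mul_ite (i ∈ s) (A i j) (w i) 0)]
        simp only [mul_zero]
        rw [Finset.sum_ite_mem, Finset.univ_inter, ← hj]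
        exact Finset.sum_congr rfl fun i _ => mul_comm _ _
    exact Or.inr ⟨hy, fun h1 => gordan_not_both A h1 hy⟩
  · -- case (1)
    obtain ⟨f, u, hfu, hu⟩ := geometric_hahn_banach_closed_point
      (convex_convexHull ℝ (Set.range r))
      ((Set.finite_range r).isClosed_convexHull ℝ) h0
    have hu0 : u < 0 := by simpa using hu
    have hx : ∃ x : Fin n → ℝ, ∀ i, 0 < A.mulVec x i := by
      refine ⟨fun j => -(f fun k => if j = k then 1 else 0), ?_⟩
      intro i
      have hfi : f (r i) < u := hfu (r i) (subset_convexHull ℝ _ (Set.mem_range_self i))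
      have hexp : f (r i) = ∑ j, A i j • f fun k => if j = k then 1 else 0 :=
        LinearMap.pi_apply_eq_sum_univ (f : (Fin n → ℝ) →ₗ[ℝ] ℝ) (r i)
      have heq : A.mulVec (fun j => -(f fun k => if j = k then 1 else 0)) i = -(f (r i)) := by
        simp only [Matrix.mulVec, dotProduct, hexp, smul_eq_mul, mul_neg]
        simp [Finset.sum_neg_distrib]
      rw [heq]
      linarith
    exact Or.inl ⟨hx, fun h2 => gordan_not_both A hx h2⟩
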